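/- For V_Y ∈ St_c(ℝⁿ) with n > c, the minimum over V_X ∈ St_c(ℝⁿ) of the nuclear norm of the stacked matrix [V_Yᵀ ; V_Xᵀ] equals √2 · c, attained at V_X = V_Y. -/

import Mathlib

open Matrix

section Aux

variable {N : Type*} [Fintype N] [DecidableEq N] {B : Matrix N N ℝ}

lemma aux_dot_self_one (hB : B.IsHermitian) (i : N) :
    star (⇑(hB.eigenvectorBasis i)) ⬝ᵥ ⇑(hB.eigenvectorBasis i) = 1 := by
  have h := orthonormal_iff_ite.mp hB.eigenvectorBasis.orthonormal i i
  rw [EuclideanSpace.inner_eq_star_dotProduct] at h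
  simpa using h

lemma aux_eigen_le_two (hB : B.IsHermitian)
    (h2 : ((2:ℝ) • (1 : Matrix N N ℝ) - B).PosSemidef) (i : N) :
    hB.eigenvalues i ≤ 2 := by
  have hpos := h2.dotProduct_mulVec_nonneg (⇑(hB.eigenvectorBasis i))
  have hmv : ((2:ℝ) • (1 : Matrix N N ℝ) - B) *ᵥ ⇑(hB.eigenvectorBasis i)
      = (2:ℝ) • ⇑(hB.eigenvectorBasis i) - B *ᵥ ⇑(hB.eigenvectorBasis i) := by
    rw [sub_mulVec, smul_mulVec, one_mulVec]
  rw [hmv, dotProduct_sub, dotProduct_smul, aux_dot_self_one hB i] at hpos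
  have hev : hB.eigenvalues i
      = star (⇑(hB.eigenvectorBasis i)) ⬝ᵥ (B *ᵥ ⇑(hB.eigenvectorBasis i)) := by
    simpa using hB.eigenvalues_eq i
  rw [← hev] at hpos
  simp only [smul_eq_mul, mul_one] at hpos
  linarith

lemma aux_eigen_zero_or_two (hB : B.IsHermitian) (hBB : B * B = (2:ℝ) • B) (i : N) :
    hB.eigenvalues i = 0 ∨ hB.eigenvalues i = 2 := by
  have hv := hB.mulVec_eigenvectorBasis i
  have h1 : (B * B) *ᵥ ⇑(hB.eigenvectorBasis i)
      = (hB.eigenvalues i * hB.eigenvalues i) • ⇑(hB.eigenvectorBasis i) := by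
    rw [← mulVec_mulVec, hv, mulVec_smul, hv, smul_smul]
  rw [hBB, smul_mulVec, hv, smul_smul] at h1
  have hvne : (⇑(hB.eigenvectorBasis i) : N → ℝ) ≠ 0 := by
    have := hB.eigenvectorBasis.orthonormal.ne_zero i
    intro h
    apply this
    ext j
    exact congrFun h j
  have hval : 2 * hB.eigenvalues i = hB.eigenvalues i * hB.eigenvalues i := by
    by_contra hne
    apply hvne
    have h0 : (2 * hB.eigenvalues i - hB.eigenvalues i * hB.eigenvalues i)
        • ⇑(hB.eigenvectorBasis i) = 0 := by rw [sub_smul, h1, sub_self]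
    rcases smul_eq_zero.mp h0 with h | h
    · exact absurd (sub_eq_zero.mp h) hne
    · exact h
  rcases eq_or_ne (hB.eigenvalues i) 0 with h | h
  · exact Or.inl h
  · exact Or.inr (mul_right_cancel₀ h hval.symm)

lemma aux_sum_eigen_eq_trace (hB : B.IsHermitian) :
    ∑ i, hB.eigenvalues i = B.trace := by
  rw [hB.trace_eq_sum_eigenvalues]
  simp

lemma aux_sqrt_lb {x : ℝ} (h0 : 0 ≤ x) (h2 : x ≤ 2) :
    x / Real.sqrt 2 ≤ Real.sqrt x := by
  rw [div_le_iff₀ (Real.sqrt_pos.mpr two_pos)]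
  calc x = Real.sqrt x * Real.sqrt x := (Real.mul_self_sqrt h0).symm
    _ ≤ Real.sqrt x * Real.sqrt 2 :=
      mul_le_mul_of_nonneg_left (Real.sqrt_le_sqrt h2) (Real.sqrt_nonneg x)

end Aux

lemma aux_proj_psd {c n : ℕ} (V : Matrix (Fin n) (Fin c) ℝ) (hV : Vᵀ * V = 1) :
    ((1 : Matrix (Fin n) (Fin n) ℝ) - V * Vᵀ).PosSemidef := by
  have hproj : V * Vᵀ * (V * Vᵀ) = V * Vᵀ := by
    rw [Matrix.mul_assoc, ← Matrix.mul_assoc Vᵀ, hV, Matrix.one_mul]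
  have key : (1 : Matrix (Fin n) (Fin n) ℝ) - V * Vᵀ
      = ((1 : Matrix (Fin n) (Fin n) ℝ) - V * Vᵀ)ᴴ * ((1 : Matrix (Fin n) (Fin n) ℝ) - V * Vᵀ) := by
    rw [conjTranspose_eq_transpose_of_trivial, transpose_sub, transpose_one, transpose_mul,
      transpose_transpose, sub_mul, mul_sub, mul_sub, Matrix.one_mul, Matrix.mul_one, hproj,
      Matrix.one_mul]
    abel
  rw [key]
  exact posSemidef_conjTranspose_mul_self _

/-- The nuclear norm of a real matrix: the sum of its singular values. -/
noncomputable def nuclearNorm {m n : Type*} [Fintype m] [Fintype n] [DecidableEq n]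
    (A : Matrix m n ℝ) : ℝ :=
  ∑ i, Real.sqrt ((show (Aᵀ * A).IsHermitian by
    simpa [Matrix.conjTranspose_eq_transpose_of_trivial] using
      Matrix.isHermitian_conjTranspose_mul_self A).eigenvalues i)

/-- For `V_Y ∈ St_c(ℝⁿ)` with `n > c`, the minimum over
`V_X ∈ St_c(ℝⁿ)` of `‖[V_Yᵀ ; V_Xᵀ]‖₊` equals `√2 · c`, attained at `V_X = V_Y`. -/
theorem min_nuclearNorm_stacked_stiefel
    {c n : ℕ} (hcn : c < n)
    (VY : Matrix (Fin n) (Fin c) ℝ) (hVY : VYᵀ * VY = 1) :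
    (∀ VX : Matrix (Fin n) (Fin c) ℝ, VXᵀ * VX = 1 →
        Real.sqrt 2 * (c : ℝ) ≤ nuclearNorm (fromRows VYᵀ VXᵀ)) ∧
      nuclearNorm (fromRows VYᵀ VYᵀ) = Real.sqrt 2 * (c : ℝ) := by
  have hsqrt2 : Real.sqrt 2 * Real.sqrt 2 = 2 := Real.mul_self_sqrt (by norm_num)
  have hsqrt2pos : (0:ℝ) < Real.sqrt 2 := Real.sqrt_pos.mpr two_pos
  constructor
  · intro VX hVX
    have hherm : ((fromRows VYᵀ VXᵀ)ᵀ * fromRows VYᵀ VXᵀ).IsHermitian := by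
      simpa [Matrix.conjTranspose_eq_transpose_of_trivial] using
        Matrix.isHermitian_conjTranspose_mul_self (fromRows VYᵀ VXᵀ)
    have hBeq : (fromRows VYᵀ VXᵀ)ᴴ * (fromRows VYᵀ VXᵀ) = VY * VYᵀ + VX * VXᵀ := by
      rw [conjTranspose_eq_transpose_of_trivial, transpose_fromRows, fromCols_mul_fromRows,
        transpose_transpose, transpose_transpose]
    have htr : ((fromRows VYᵀ VXᵀ)ᴴ * (fromRows VYᵀ VXᵀ)).trace = 2 * (c:ℝ) := by
      rw [hBeq, trace_add, trace_mul_comm VY, trace_mul_comm VX, hVY, hVX, trace_one]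
      simp [Fintype.card_fin]; try ring
    have hpsd2 : ((2:ℝ) • (1 : Matrix (Fin n) (Fin n) ℝ)
        - (fromRows VYᵀ VXᵀ)ᴴ * (fromRows VYᵀ VXᵀ)).PosSemidef := by
      have h : (2:ℝ) • (1 : Matrix (Fin n) (Fin n) ℝ)
          - (fromRows VYᵀ VXᵀ)ᴴ * (fromRows VYᵀ VXᵀ)
          = (1 - VY * VYᵀ) + (1 - VX * VXᵀ) := by
        rw [hBeq, two_smul]; abel
      rw [h]
      exact (aux_proj_psd VY hVY).add (aux_proj_psd VX hVX)
    have hsum : ∑ i, hherm.eigenvalues i = 2 * (c:ℝ) := by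
      rw [aux_sum_eigen_eq_trace hherm]; exact htr
    have hkey : Real.sqrt 2 * (c:ℝ) = (∑ i, hherm.eigenvalues i) / Real.sqrt 2 := by
      rw [hsum, eq_div_iff (ne_of_gt hsqrt2pos)]
      nlinarith [hsqrt2]
    unfold nuclearNorm
    rw [hkey, Finset.sum_div]
    exact Finset.sum_le_sum fun i _ =>
      aux_sqrt_lb (Matrix.eigenvalues_conjTranspose_mul_self_nonneg _ i)
        (aux_eigen_le_two hherm hpsd2 i)
  · have hherm : ((fromRows VYᵀ VYᵀ)ᵀ * fromRows VYᵀ VYᵀ).IsHermitian := by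
      simpa [Matrix.conjTranspose_eq_transpose_of_trivial] using
        Matrix.isHermitian_conjTranspose_mul_self (fromRows VYᵀ VYᵀ)
    have hBeq : (fromRows VYᵀ VYᵀ)ᴴ * (fromRows VYᵀ VYᵀ) = VY * VYᵀ + VY * VYᵀ := by
      rw [conjTranspose_eq_transpose_of_trivial, transpose_fromRows, fromCols_mul_fromRows,
        transpose_transpose]
    have hproj : VY * VYᵀ * (VY * VYᵀ) = VY * VYᵀ := by
      rw [Matrix.mul_assoc, ← Matrix.mul_assoc VYᵀ, hVY, Matrix.one_mul]
    have hBB : ((fromRows VYᵀ VYᵀ)ᴴ * (fromRows VYᵀ VYᵀ))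
        * ((fromRows VYᵀ VYᵀ)ᴴ * (fromRows VYᵀ VYᵀ))
        = (2:ℝ) • ((fromRows VYᵀ VYᵀ)ᴴ * (fromRows VYᵀ VYᵀ)) := by
      rw [hBeq, two_smul]
      simp only [add_mul, mul_add, hproj]
      try abel
    have htr : ((fromRows VYᵀ VYᵀ)ᴴ * (fromRows VYᵀ VYᵀ)).trace = 2 * (c:ℝ) := by
      rw [hBeq, trace_add, trace_mul_comm VY, hVY, trace_one]
      simp [Fintype.card_fin]; try ring
    have hsum : ∑ i, hherm.eigenvalues i = 2 * (c:ℝ) := by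
      rw [aux_sum_eigen_eq_trace hherm]; exact htr
    have hsqrt_eq : ∀ i, Real.sqrt (hherm.eigenvalues i)
        = hherm.eigenvalues i / Real.sqrt 2 := by
      intro i
      rcases aux_eigen_zero_or_two hherm hBB i with h | h <;> rw [h]
      · simp
      · rw [eq_div_iff (ne_of_gt hsqrt2pos)]
        exact hsqrt2
    unfold nuclearNorm
    rw [Finset.sum_congr rfl (fun i _ => hsqrt_eq i), ← Finset.sum_div, hsum,
      div_eq_iff (ne_of_gt hsqrt2pos)]
    nlinarith [hsqrt2]
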